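/- If P is a monic real polynomial of degree d whose d roots are all real (P is hyperbolic), and u is the j-th real root of P in increasing order (with multiplicity, 1 ≤ j ≤ d), then the j-th virtual root ρ_{d,j}(P) equals u. -/

import Mathlib

open Polynomial Set

noncomputable def monicPoly (d : ℕ) (c : Fin d → ℝ) : Polynomial ℝ :=
  X ^ d + ∑ i : Fin d, C (c i) * X ^ (i : ℕ)

noncomputable def dCoeff {d : ℕ} (c : Fin (d + 1) → ℝ) : Fin d → ℝ :=
  fun i => c i.succ * ((i : ℕ) + 1) / (d + 1)

noncomputable def bnd {d : ℕ} (c : Fin d → ℝ) : ℝ := 1 + ⨆ i, |c i|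

/-- The point of `[a,b]` where `|P|` attains its minimum. -/
noncomputable def Rmin (a b : ℝ) (P : Polynomial ℝ) : ℝ :=
  if h : a ≤ b then
    (isCompact_Icc.exists_isMinOn (Set.nonempty_Icc.mpr h)
      ((continuous_abs.comp P.continuous).continuousOn)).choose
  else a

/-- The `j`-th virtual root of the monic polynomial with coefficient vector `c`,
defined inductively as the minimizer of `|P|` between consecutive virtual roots
of `P/d`, infinite endpoints being handled by the Cauchy root bound `bnd`. -/
noncomputable def vroot : (d : ℕ) → ℤ → (Fin d → ℝ) → ℝ
  | 0, _, _ => 0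
  | d + 1, j, c =>
    Rmin (if 1 < j then vroot d (j - 1) (dCoeff c) else -(bnd c))
      (if j < (d : ℤ) + 1 then vroot d j (dCoeff c) else bnd c)
      (monicPoly (d + 1) c)

lemma degree_sum_lt (d : ℕ) (c : Fin d → ℝ) :
    (∑ i : Fin d, C (c i) * X ^ (i : ℕ) : ℝ[X]).degree < (d : WithBot ℕ) := by
  refine lt_of_le_of_lt (degree_sum_le _ _) ?_
  refine (Finset.sup_lt_iff (WithBot.bot_lt_coe d)).mpr ?_
  intro i _
  exact lt_of_le_of_lt (degree_C_mul_X_pow_le _ _) (by exact WithBot.coe_lt_coe.mpr i.isLt)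

lemma monicPoly_monic (d : ℕ) (c : Fin d → ℝ) : (monicPoly d c).Monic :=
  Polynomial.monic_X_pow_add (degree_sum_lt d c)

lemma monicPoly_ne_zero (d : ℕ) (c : Fin d → ℝ) : monicPoly d c ≠ 0 :=
  (monicPoly_monic d c).ne_zero

lemma degree_monicPoly (d : ℕ) (c : Fin d → ℝ) : (monicPoly d c).degree = d := by
  rw [monicPoly, degree_add_eq_left_of_degree_lt, degree_X_pow]
  rw [degree_X_pow]; exact degree_sum_lt d c

lemma natDegree_monicPoly (d : ℕ) (c : Fin d → ℝ) : (monicPoly d c).natDegree = d :=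
  natDegree_eq_of_degree_eq_some (degree_monicPoly d c)

lemma eval_monicPoly (d : ℕ) (c : Fin d → ℝ) (x : ℝ) :
    (monicPoly d c).eval x = x ^ d + ∑ i : Fin d, c i * x ^ (i : ℕ) := by
  simp [monicPoly, eval_finset_sum]

lemma le_csup {d : ℕ} (c : Fin d → ℝ) (i : Fin d) : |c i| ≤ ⨆ k, |c k| :=
  le_ciSup (f := fun k => |c k|) (Set.Finite.bddAbove (Set.finite_range _)) i

lemma bnd_pos {d : ℕ} (hd : 0 < d) (c : Fin d → ℝ) : 0 < bnd c := by
  have i : Fin d := ⟨0, hd⟩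
  have h1 : (0:ℝ) ≤ |c i| := abs_nonneg _
  have := le_csup c i
  unfold bnd; linarith

lemma abs_root_le_bnd {d : ℕ} (hd : 0 < d) (c : Fin d → ℝ) {z : ℝ}
    (hz : (monicPoly d c).IsRoot z) : |z| ≤ bnd c := by
  by_contra hgt
  push_neg at hgt
  set M := ⨆ k, |c k| with hM
  have hM0 : 0 ≤ M := by
    have i : Fin d := ⟨0, hd⟩
    exact le_trans (abs_nonneg (c i)) (le_csup c i)
  have hz1 : 1 < |z| := by unfold bnd at hgt; linarith
  have hev : z ^ d = -∑ i : Fin d, c i * z ^ (i : ℕ) := by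
    have := hz
    rw [IsRoot, eval_monicPoly] at this
    linarith
  have habs : |z| ^ d ≤ M * ∑ i : Fin d, |z| ^ (i : ℕ) := by
    calc |z| ^ d = |z ^ d| := (abs_pow z d).symm
    _ = |∑ i : Fin d, c i * z ^ (i : ℕ)| := by rw [hev, abs_neg]
    _ ≤ ∑ i : Fin d, |c i * z ^ (i : ℕ)| := Finset.abs_sum_le_sum_abs _ _
    _ ≤ ∑ i : Fin d, M * |z| ^ (i : ℕ) := by
        refine Finset.sum_le_sum fun i _ => ?_
        rw [abs_mul, abs_pow]
        exact mul_le_mul_of_nonneg_right (le_csup c i) (pow_nonneg (abs_nonneg z) _)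
    _ = M * ∑ i : Fin d, |z| ^ (i : ℕ) := by rw [Finset.mul_sum]
  have hgeom : ∑ i : Fin d, |z| ^ (i : ℕ) = (|z| ^ d - 1) / (|z| - 1) := by
    rw [Fin.sum_univ_eq_sum_range (fun i => |z| ^ i) d, geom_sum_eq (ne_of_gt hz1)]
  have hz0 : (0:ℝ) < |z| - 1 := by linarith
  have hpow : (0:ℝ) < |z| ^ d := pow_pos (by linarith) d
  have hle : |z| ^ d * (|z| - 1) ≤ M * (|z| ^ d - 1) := by
    rw [hgeom] at habs
    calc |z| ^ d * (|z| - 1) ≤ (M * ((|z| ^ d - 1) / (|z| - 1))) * (|z| - 1) :=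
          mul_le_mul_of_nonneg_right habs (le_of_lt hz0)
    _ = M * (|z| ^ d - 1) := by field_simp
  have h2 : M * (|z| ^ d - 1) ≤ M * |z| ^ d := by nlinarith
  have h3 : |z| - 1 ≤ M := by
    have := le_trans hle h2
    have := (mul_le_mul_iff_left₀ hpow).mp (by linarith [this] : (|z| - 1) * |z|^d ≤ M * |z|^d)
    linarith
  unfold bnd at hgt; linarith

lemma deriv_monicPoly (d : ℕ) (c : Fin (d+1) → ℝ) :
    (monicPoly (d+1) c).derivative = C ((d:ℝ)+1) * monicPoly d (dCoeff c) := by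
  have hne : ((d:ℝ)+1) ≠ 0 := by positivity
  rw [monicPoly, monicPoly, derivative_add, derivative_X_pow, derivative_sum, mul_add]
  congr 1
  · push_cast; ring_nf
  · rw [Fin.sum_univ_succ, Finset.mul_sum]
    have h0 : (derivative (C (c 0) * X ^ ((0 : Fin (d+1)) : ℕ)) : ℝ[X]) = 0 := by
      simp
    rw [h0, zero_add]
    refine Finset.sum_congr rfl fun i _ => ?_
    rw [derivative_C_mul, derivative_X_pow]
    have h1 : ((i.succ : ℕ)) = (i : ℕ) + 1 := rfl
    rw [h1]
    have h2 : ((i:ℕ) + 1) - 1 = (i:ℕ) := rfl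
    rw [h2]
    rw [← mul_assoc, ← C_mul, ← mul_assoc, ← C_mul]
    congr 2
    unfold dCoeff
    push_cast
    field_simp

open Multiset in
lemma card_filter_lt_split (S : Multiset ℝ) {w t : ℝ} (hwt : w < t) :
    (S.filter (fun x => x < t)).card
      = (S.filter (fun x => x < w)).card + S.count w
        + (S.filter (fun x => w < x ∧ x < t)).card := by
  classical
  have h : S.filter (fun x => x < t)
      = S.filter (fun x => x < w) + S.filter (fun x => x = w)
        + S.filter (fun x => w < x ∧ x < t) := by
    ext a
    simp only [Multiset.count_add, Multiset.count_filter]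
    rcases lt_trichotomy a w with h1 | h1 | h1
    · simp [h1, lt_trans h1 hwt, ne_of_lt h1, not_lt.mpr (le_of_lt h1), asymm h1]
    · subst h1; simp [hwt, lt_irrefl]
    · by_cases h2 : a < t <;>
        simp [h1, h2, not_lt.mpr (le_of_lt h1), ne_of_gt h1]
  rw [h, Multiset.card_add, Multiset.card_add, Multiset.filter_eq', Multiset.card_replicate]

open Multiset in
lemma card_filter_gt_split (S : Multiset ℝ) {w t : ℝ} (hwt : t < w) :
    (S.filter (fun x => t < x)).card
      = (S.filter (fun x => w < x)).card + S.count w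
        + (S.filter (fun x => t < x ∧ x < w)).card := by
  classical
  have h : S.filter (fun x => t < x)
      = S.filter (fun x => w < x) + S.filter (fun x => x = w)
        + S.filter (fun x => t < x ∧ x < w) := by
    ext a
    simp only [Multiset.count_add, Multiset.count_filter]
    rcases lt_trichotomy a w with h1 | h1 | h1
    · by_cases h2 : t < a <;>
        simp [h1, h2, not_lt.mpr (le_of_lt h1), ne_of_lt h1]
    · subst h1; simp [hwt, lt_irrefl]
    · simp [h1, lt_trans hwt h1, ne_of_gt h1, not_lt.mpr (le_of_lt h1), asymm h1]
  rw [h, Multiset.card_add, Multiset.card_add, Multiset.filter_eq', Multiset.card_replicate]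

open Multiset in
lemma card_split_tri (S : Multiset ℝ) (w : ℝ) :
    S.card = (S.filter (fun x => x < w)).card + S.count w
      + (S.filter (fun x => w < x)).card := by
  classical
  have h : S = S.filter (fun x => x < w) + S.filter (fun x => x = w)
      + S.filter (fun x => w < x) := by
    ext a
    simp only [Multiset.count_add, Multiset.count_filter]
    rcases lt_trichotomy a w with h1 | h1 | h1
    · simp [h1, ne_of_lt h1, asymm h1]
    · subst h1; simp [lt_irrefl]
    · simp [h1, ne_of_gt h1, not_lt.mpr (le_of_lt h1)]
  conv_lhs => rw [h]
  rw [Multiset.card_add, Multiset.card_add, Multiset.filter_eq', Multiset.card_replicate]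

lemma exists_deriv_root (P : ℝ[X]) {a b : ℝ} (hab : a < b) (ha : P.eval a = 0)
    (hb : P.eval b = 0) : ∃ c ∈ Ioo a b, P.derivative.eval c = 0 := by
  obtain ⟨c, hc, hc'⟩ := exists_deriv_eq_zero (f := fun x => P.eval x) hab
    (P.continuous.continuousOn) (by show P.eval a = P.eval b; rw [ha, hb])
  exact ⟨c, hc, by rwa [Polynomial.deriv] at hc'⟩

lemma derivative_ne_zero_of_root (P : ℝ[X]) (hP : P ≠ 0) {z : ℝ} (hz : P.eval z = 0) :
    P.derivative ≠ 0 := by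
  intro h
  have h0 := Polynomial.natDegree_eq_zero_of_derivative_eq_zero h
  obtain ⟨a, rfl⟩ := Polynomial.natDegree_eq_zero.mp h0
  simp at hz
  exact hP (by rw [hz, map_zero])

lemma count_lt_deriv (P : ℝ[X]) (hP : P ≠ 0) :
    ∀ n : ℕ, ∀ z : ℝ, P.eval z = 0 → (P.roots.filter (fun x => x < z)).card = n →
      (P.roots.filter (fun x => x < z)).card
        ≤ (P.derivative.roots.filter (fun x => x < z)).card := by
  classical
  intro n
  induction n using Nat.strong_induction_on with
  | _ n IH =>
    intro z hz hn
    by_cases hF : P.roots.filter (fun x => x < z) = 0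
    · rw [hF]; exact Nat.zero_le _
    · have hTne : (P.roots.filter (fun x => x < z)).toFinset.Nonempty := by
        rwa [Multiset.toFinset_nonempty]
      set w := (P.roots.filter (fun x => x < z)).toFinset.max' hTne with hw
      have hwF : w ∈ P.roots.filter (fun x => x < z) :=
        Multiset.mem_toFinset.mp (Finset.max'_mem _ hTne)
      have hmax : ∀ x ∈ P.roots.filter (fun x => x < z), x ≤ w := fun x hx =>
        Finset.le_max' _ x (Multiset.mem_toFinset.mpr hx)
      obtain ⟨hwroots, hwz⟩ := Multiset.mem_filter.mp hwF
      have hwroot : P.eval w = 0 := (Polynomial.mem_roots hP).mp hwroots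
      have hP' : P.derivative ≠ 0 := derivative_ne_zero_of_root P hP hz
      -- split for P
      have hsplitP := card_filter_lt_split P.roots hwz
      have hmid : P.roots.filter (fun x => w < x ∧ x < z) = 0 := by
        rw [Multiset.eq_zero_iff_forall_notMem]
        intro x hx
        have hx' := Multiset.mem_filter.mp hx
        exact absurd (hmax x (Multiset.mem_filter.mpr ⟨hx'.1, hx'.2.2⟩)) (not_le.mpr hx'.2.1)
      rw [hmid] at hsplitP
      simp only [Multiset.card_zero, add_zero] at hsplitP
      -- multiplicities
      have hcount : P.roots.count w = P.rootMultiplicity w := P.count_roots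
      have hm1 : 1 ≤ P.roots.count w := Multiset.one_le_count_iff_mem.mpr hwroots
      have hcount' : P.derivative.roots.count w = P.roots.count w - 1 := by
        rw [hcount, P.derivative.count_roots]
        exact Polynomial.derivative_rootMultiplicity_of_root hwroot
      -- Rolle root in (w, z)
      obtain ⟨cc, hcc, hccz⟩ := exists_deriv_root P hwz hwroot hz
      have hccmem : cc ∈ P.derivative.roots.filter (fun x => w < x ∧ x < z) :=
        Multiset.mem_filter.mpr ⟨(Polynomial.mem_roots hP').mpr hccz, hcc.1, hcc.2⟩
      have hmid' : 1 ≤ (P.derivative.roots.filter (fun x => w < x ∧ x < z)).card :=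
        Multiset.one_le_count_iff_mem.mpr hccmem |>.trans (Multiset.count_le_card _ _)
      -- split for P'
      have hsplitP' := card_filter_lt_split P.derivative.roots hwz
      -- IH at w
      have hIH := IH ((P.roots.filter (fun x => x < w)).card)
        (by omega) w hwroot rfl
      omega

lemma count_gt_deriv (P : ℝ[X]) (hP : P ≠ 0) :
    ∀ n : ℕ, ∀ z : ℝ, P.eval z = 0 → (P.roots.filter (fun x => z < x)).card = n →
      (P.roots.filter (fun x => z < x)).card
        ≤ (P.derivative.roots.filter (fun x => z < x)).card := by
  classical
  intro n
  induction n using Nat.strong_induction_on with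
  | _ n IH =>
    intro z hz hn
    by_cases hF : P.roots.filter (fun x => z < x) = 0
    · rw [hF]; exact Nat.zero_le _
    · have hTne : (P.roots.filter (fun x => z < x)).toFinset.Nonempty := by
        rwa [Multiset.toFinset_nonempty]
      set w := (P.roots.filter (fun x => z < x)).toFinset.min' hTne with hw
      have hwF : w ∈ P.roots.filter (fun x => z < x) :=
        Multiset.mem_toFinset.mp (Finset.min'_mem _ hTne)
      have hmin : ∀ x ∈ P.roots.filter (fun x => z < x), w ≤ x := fun x hx =>
        Finset.min'_le _ x (Multiset.mem_toFinset.mpr hx)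
      obtain ⟨hwroots, hwz⟩ := Multiset.mem_filter.mp hwF
      have hwroot : P.eval w = 0 := (Polynomial.mem_roots hP).mp hwroots
      have hP' : P.derivative ≠ 0 := derivative_ne_zero_of_root P hP hz
      have hsplitP := card_filter_gt_split P.roots hwz
      have hmid : P.roots.filter (fun x => z < x ∧ x < w) = 0 := by
        rw [Multiset.eq_zero_iff_forall_notMem]
        intro x hx
        have hx' := Multiset.mem_filter.mp hx
        exact absurd (hmin x (Multiset.mem_filter.mpr ⟨hx'.1, hx'.2.1⟩)) (not_le.mpr hx'.2.2)
      rw [hmid] at hsplitP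
      simp only [Multiset.card_zero, add_zero] at hsplitP
      have hcount : P.roots.count w = P.rootMultiplicity w := P.count_roots
      have hm1 : 1 ≤ P.roots.count w := Multiset.one_le_count_iff_mem.mpr hwroots
      have hcount' : P.derivative.roots.count w = P.roots.count w - 1 := by
        rw [hcount, P.derivative.count_roots]
        exact Polynomial.derivative_rootMultiplicity_of_root hwroot
      obtain ⟨cc, hcc, hccz⟩ := exists_deriv_root P hwz hz hwroot
      have hccmem : cc ∈ P.derivative.roots.filter (fun x => z < x ∧ x < w) :=
        Multiset.mem_filter.mpr ⟨(Polynomial.mem_roots hP').mpr hccz, hcc.1, hcc.2⟩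
      have hmid' : 1 ≤ (P.derivative.roots.filter (fun x => z < x ∧ x < w)).card :=
        Multiset.one_le_count_iff_mem.mpr hccmem |>.trans (Multiset.count_le_card _ _)
      have hsplitP' := card_filter_gt_split P.derivative.roots hwz
      have hIH := IH ((P.roots.filter (fun x => w < x)).card)
        (by omega) w hwroot rfl
      omega

lemma count_lt_deriv_succ (P : ℝ[X]) (hP : P ≠ 0) (hP' : P.derivative ≠ 0) (t : ℝ) :
    (P.roots.filter (fun x => x < t)).card
      ≤ (P.derivative.roots.filter (fun x => x < t)).card + 1 := by
  classical
  by_cases hF : P.roots.filter (fun x => x < t) = 0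
  · rw [hF]; exact Nat.zero_le _
  · have hTne : (P.roots.filter (fun x => x < t)).toFinset.Nonempty := by
      rwa [Multiset.toFinset_nonempty]
    set w := (P.roots.filter (fun x => x < t)).toFinset.max' hTne with hw
    have hwF : w ∈ P.roots.filter (fun x => x < t) :=
      Multiset.mem_toFinset.mp (Finset.max'_mem _ hTne)
    have hmax : ∀ x ∈ P.roots.filter (fun x => x < t), x ≤ w := fun x hx =>
      Finset.le_max' _ x (Multiset.mem_toFinset.mpr hx)
    obtain ⟨hwroots, hwt⟩ := Multiset.mem_filter.mp hwF
    have hwroot : P.eval w = 0 := (Polynomial.mem_roots hP).mp hwroots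
    have hsplitP := card_filter_lt_split P.roots hwt
    have hmid : P.roots.filter (fun x => w < x ∧ x < t) = 0 := by
      rw [Multiset.eq_zero_iff_forall_notMem]
      intro x hx
      have hx' := Multiset.mem_filter.mp hx
      exact absurd (hmax x (Multiset.mem_filter.mpr ⟨hx'.1, hx'.2.2⟩)) (not_le.mpr hx'.2.1)
    rw [hmid] at hsplitP
    simp only [Multiset.card_zero, add_zero] at hsplitP
    have hcount : P.roots.count w = P.rootMultiplicity w := P.count_roots
    have hm1 : 1 ≤ P.roots.count w := Multiset.one_le_count_iff_mem.mpr hwroots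
    have hcount' : P.derivative.roots.count w = P.roots.count w - 1 := by
      rw [hcount, P.derivative.count_roots]
      exact Polynomial.derivative_rootMultiplicity_of_root hwroot
    have hsplitP' := card_filter_lt_split P.derivative.roots hwt
    have hIH := count_lt_deriv P hP ((P.roots.filter (fun x => x < w)).card) w hwroot rfl
    omega

lemma sorted_getD_lt_iff (t : ℝ) : ∀ (l : List ℝ), l.Pairwise (·≤·) → ∀ i, i < l.length →
    (l.getD i 0 < t ↔ i < (l.filter (fun x => decide (x < t))).length) := by
  intro l
  induction l with
  | nil => intro _ i hi; simp at hi
  | cons a l ih =>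
    intro hs i hi
    have hal : ∀ x ∈ l, a ≤ x := (List.pairwise_cons.mp hs).1
    have hl : l.Pairwise (·≤·) := (List.pairwise_cons.mp hs).2
    cases i with
    | zero =>
      simp only [List.getD_cons_zero]
      by_cases hat : a < t
      · rw [List.filter_cons_of_pos (by simp [hat])]
        simp [hat]
      · have hnil : l.filter (fun x => decide (x < t)) = [] := by
          rw [List.filter_eq_nil_iff]
          intro x hx
          simp only [decide_eq_true_eq, not_lt]
          exact le_trans (not_lt.mp hat) (hal x hx)
        rw [List.filter_cons_of_neg (by simp [hat]), hnil]
        simp [hat]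
    | succ i =>
      have hi' : i < l.length := by simpa using hi
      simp only [List.getD_cons_succ]
      by_cases hat : a < t
      · rw [List.filter_cons_of_pos (by simp [hat])]
        simp only [List.length_cons]
        rw [ih hl i hi']
        omega
      · have hnil : l.filter (fun x => decide (x < t)) = [] := by
          rw [List.filter_eq_nil_iff]
          intro x hx
          simp only [decide_eq_true_eq, not_lt]
          exact le_trans (not_lt.mp hat) (hal x hx)
        have hnlt : ¬ (l.getD i 0 < t) := by
          rw [List.getD_eq_getElem l 0 hi']
          exact not_lt.mpr (le_trans (not_lt.mp hat) (hal _ (l.getElem_mem hi')))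
        rw [List.filter_cons_of_neg (by simp [hat]), hnil]
        simp only [List.length_nil]
        exact iff_of_false hnlt (by omega)

lemma sorted_getD_lt_iff_count (S : Multiset ℝ) (i : ℕ) (hi : i < Multiset.card S) (t : ℝ) :
    ((S.sort (·≤·)).getD i 0 < t ↔ i < ((S.filter (fun x => x < t)).card)) := by
  classical
  have h := sorted_getD_lt_iff t (S.sort (·≤·)) (S.pairwise_sort _) i
    (by rwa [Multiset.length_sort])
  rw [h]
  have h2 : (S.filter (fun x => x < t)).card
      = ((S.sort (·≤·)).filter (fun x => decide (x < t))).length := by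
    conv_lhs => rw [← Multiset.sort_eq S (·≤·)]
    rw [Multiset.filter_coe, Multiset.coe_card]
  rw [h2]

lemma sorted_getD_mono (S : Multiset ℝ) {i k : ℕ} (hik : i ≤ k) (hk : k < Multiset.card S) :
    (S.sort (·≤·)).getD i 0 ≤ (S.sort (·≤·)).getD k 0 := by
  have hlen : (S.sort (·≤·)).length = Multiset.card S := Multiset.length_sort _
  have hk' : k < (S.sort (·≤·)).length := by omega
  have hi' : i < (S.sort (·≤·)).length := by omega
  rw [List.getD_eq_getElem _ 0 hk', List.getD_eq_getElem _ 0 hi']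
  rcases eq_or_lt_of_le hik with rfl | hlt
  · rfl
  · exact List.pairwise_iff_getElem.mp (S.pairwise_sort (·≤·)) i k hi' hk' hlt

lemma mem_sort_index (S : Multiset ℝ) {z : ℝ} (hz : z ∈ S) :
    ∃ k, ∃ hk : k < Multiset.card S, (S.sort (·≤·)).getD k 0 = z := by
  have hmem : z ∈ S.sort (·≤·) := (Multiset.mem_sort _).mpr hz
  obtain ⟨k, hk, hkz⟩ := List.mem_iff_getElem.mp hmem
  refine ⟨k, by rwa [Multiset.length_sort] at hk, ?_⟩
  rw [List.getD_eq_getElem _ 0 hk, hkz]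

lemma Rmin_eq_root (P : ℝ[X]) {a b r : ℝ} (har : a ≤ r) (hrb : r ≤ b)
    (hr : P.eval r = 0) (hno : ∀ z ∈ Ioo a b, P.derivative.eval z ≠ 0) :
    Rmin a b P = r := by
  have hab : a ≤ b := har.trans hrb
  have huniq : ∀ y ∈ Icc a b, P.eval y = 0 → y = r := by
    intro y hy hyz
    rcases lt_trichotomy y r with h | h | h
    · obtain ⟨cc, hcc, hcc0⟩ := exists_deriv_root P h hyz hr
      exact absurd hcc0 (hno cc ⟨lt_of_le_of_lt hy.1 hcc.1, lt_of_lt_of_le hcc.2 hrb⟩)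
    · exact h
    · obtain ⟨cc, hcc, hcc0⟩ := exists_deriv_root P h hr hyz
      exact absurd hcc0 (hno cc ⟨lt_of_le_of_lt har hcc.1, lt_of_lt_of_le hcc.2 hy.2⟩)
  rw [Rmin, dif_pos hab]
  have h := (isCompact_Icc.exists_isMinOn (Set.nonempty_Icc.mpr hab)
      ((continuous_abs.comp P.continuous).continuousOn)).choose_spec
  refine huniq _ h.1 ?_
  have hle := isMinOn_iff.mp h.2 r ⟨har, hrb⟩
  simp only [Function.comp_apply] at hle
  rw [hr] at hle
  simpa using hle

lemma roots_deriv (d : ℕ) (c : Fin (d+1) → ℝ) :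
    (monicPoly (d+1) c).derivative.roots = (monicPoly d (dCoeff c)).roots := by
  rw [deriv_monicPoly]
  exact Polynomial.roots_C_mul _ (by positivity)

lemma deriv_monicPoly_ne_zero (d : ℕ) (c : Fin (d+1) → ℝ) :
    (monicPoly (d+1) c).derivative ≠ 0 := by
  rw [deriv_monicPoly]
  exact mul_ne_zero (Polynomial.C_ne_zero.mpr (by positivity)) (monicPoly_ne_zero _ _)

lemma roots_all_lt_bnd (d : ℕ) (hd : 0 < d) (c : Fin d → ℝ) :
    (monicPoly d c).roots.filter (fun x => x < bnd c + 1) = (monicPoly d c).roots := by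
  classical
  refine Multiset.filter_eq_self.mpr fun z hz => ?_
  have := abs_root_le_bnd hd c ((Polynomial.mem_roots (monicPoly_ne_zero d c)).mp hz)
  have := abs_le.mp this
  linarith [this.2]

lemma card_roots_deriv (d : ℕ) (c : Fin (d+1) → ℝ)
    (hyp : Multiset.card (monicPoly (d+1) c).roots = d+1) :
    Multiset.card (monicPoly d (dCoeff c)).roots = d := by
  classical
  have hle : Multiset.card (monicPoly d (dCoeff c)).roots ≤ d := by
    have := Polynomial.card_roots' (monicPoly d (dCoeff c))
    rwa [natDegree_monicPoly] at this
  have hge := count_lt_deriv_succ (monicPoly (d+1) c) (monicPoly_ne_zero _ _)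
    (deriv_monicPoly_ne_zero d c) (bnd c + 1)
  rw [roots_all_lt_bnd (d+1) (Nat.succ_pos d) c, hyp, roots_deriv] at hge
  have := Multiset.card_le_card (Multiset.filter_le
    (fun x => x < bnd c + 1) (monicPoly d (dCoeff c)).roots)
  omega

lemma main_step (d : ℕ) (c : Fin (d+1) → ℝ)
    (hyp : Multiset.card (monicPoly (d+1) c).roots = d+1)
    (j : ℕ) (hj1 : 1 ≤ j) (hjd : j ≤ d+1)
    (hIH : ∀ k : ℕ, 1 ≤ k → k ≤ d →
      vroot d (k:ℤ) (dCoeff c) = ((monicPoly d (dCoeff c)).roots.sort (·≤·)).getD (k-1) 0) :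
    vroot (d+1) (j:ℤ) c = ((monicPoly (d+1) c).roots.sort (·≤·)).getD (j-1) 0 := by
  classical
  set P := monicPoly (d+1) c with hP
  set Q := monicPoly d (dCoeff c) with hQ
  have hP0 : P ≠ 0 := monicPoly_ne_zero _ _
  have hQ0 : Q ≠ 0 := monicPoly_ne_zero _ _
  have hP'0 : P.derivative ≠ 0 := deriv_monicPoly_ne_zero d c
  have hQcard : Multiset.card Q.roots = d := card_roots_deriv d c hyp
  have hPQ : P.derivative.roots = Q.roots := roots_deriv d c
  set l := P.roots.sort (·≤·) with hl
  set l' := Q.roots.sort (·≤·) with hl'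
  set r := l.getD (j-1) 0 with hr
  -- r is a root of P
  have hlen : l.length = d + 1 := by rw [hl, Multiset.length_sort, hyp]
  have hj1' : j - 1 < l.length := by omega
  have hrmem : r ∈ P.roots := by
    rw [hr, List.getD_eq_getElem l 0 hj1']
    exact (Multiset.mem_sort _).mp (List.getElem_mem hj1')
  have hrroot : P.eval r = 0 := (Polynomial.mem_roots hP0).mp hrmem
  have hrabs := abs_le.mp (abs_root_le_bnd (Nat.succ_pos d) c hrroot)
  -- the endpoints
  set a := if 1 < j then l'.getD (j-2) 0 else -(bnd c) with ha
  set b := if j < d+1 then l'.getD (j-1) 0 else bnd c with hb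
  -- a ≤ r
  have har : a ≤ r := by
    by_cases hj : 1 < j
    · rw [ha, if_pos hj]
      by_contra hlt
      push_neg at hlt
      have hiff := sorted_getD_lt_iff_count P.roots (j-1) (by omega) (l'.getD (j-2) 0)
      rw [← hl, ← hr] at hiff
      have h1 : j - 1 < Multiset.card (P.roots.filter (fun x => x < l'.getD (j-2) 0)) :=
        hiff.mp hlt
      have h2 := count_lt_deriv_succ P hP0 hP'0 (l'.getD (j-2) 0)
      rw [hPQ] at h2
      have hiff2 := sorted_getD_lt_iff_count Q.roots (j-2) (by omega) (l'.getD (j-2) 0)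
      rw [← hl'] at hiff2
      have h3 : ¬ (j - 2 < Multiset.card (Q.roots.filter (fun x => x < l'.getD (j-2) 0))) :=
        fun h => lt_irrefl _ (hiff2.mpr h)
      omega
    · rw [ha, if_neg hj]
      linarith [hrabs.1]
  -- r ≤ b
  have hrb : r ≤ b := by
    by_cases hj : j < d + 1
    · rw [hb, if_pos hj]
      by_contra hlt
      push_neg at hlt
      have hiff := sorted_getD_lt_iff_count Q.roots (j-1) (by omega) r
      rw [← hl'] at hiff
      have h1 : j - 1 < Multiset.card (Q.roots.filter (fun x => x < r)) := hiff.mp hlt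
      -- N<(Q, r) ≤ N<(P, r)
      have htriQ := card_split_tri Q.roots r
      have htriP := card_split_tri P.roots r
      have hcount : Q.roots.count r = P.roots.count r - 1 := by
        rw [← hPQ, P.derivative.count_roots, P.count_roots]
        exact Polynomial.derivative_rootMultiplicity_of_root hrroot
      have hm1 : 1 ≤ P.roots.count r := Multiset.one_le_count_iff_mem.mpr hrmem
      have hgt : (P.roots.filter (fun x => r < x)).card
          ≤ (Q.roots.filter (fun x => r < x)).card := by
        rw [← hPQ]
        exact count_gt_deriv P hP0 _ r hrroot rfl
      have hiffP := sorted_getD_lt_iff_count P.roots (j-1) (by omega) r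
      rw [← hl, ← hr] at hiffP
      have h4 : ¬ (j - 1 < Multiset.card (P.roots.filter (fun x => x < r))) :=
        fun h => lt_irrefl _ (hiffP.mpr h)
      rw [hyp] at htriP
      rw [hQcard] at htriQ
      omega
    · rw [hb, if_neg hj]
      linarith [hrabs.2]
  -- no roots of P' in Ioo a b
  have hno : ∀ z ∈ Ioo a b, P.derivative.eval z ≠ 0 := by
    intro z hz hz0
    have hzQ : z ∈ Q.roots := by
      rw [← hPQ]
      exact (Polynomial.mem_roots hP'0).mpr hz0
    obtain ⟨k, hk, hkz⟩ := mem_sort_index Q.roots hzQ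
    rw [hQcard] at hk
    have hk1 : 1 < j → j - 1 ≤ k := by
      intro hj
      by_contra hcon
      push_neg at hcon
      have : l'.getD k 0 ≤ l'.getD (j-2) 0 :=
        sorted_getD_mono Q.roots (by omega) (by omega)
      rw [hkz] at this
      have haz : a < z := hz.1
      rw [ha, if_pos hj] at haz
      linarith
    have hk2 : j < d + 1 → k < j - 1 := by
      intro hj
      by_contra hcon
      push_neg at hcon
      have : l'.getD (j-1) 0 ≤ l'.getD k 0 :=
        sorted_getD_mono Q.roots (by omega) (by omega)
      rw [hkz] at this
      have hzb : z < b := hz.2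
      rw [hb, if_pos hj] at hzb
      linarith
    by_cases hja : 1 < j <;> by_cases hjb : j < d + 1
    · exact absurd (hk2 hjb) (not_lt.mpr (hk1 hja))
    · have := hk1 hja; omega
    · have := hk2 hjb; omega
    · omega
  -- conclude
  have hvr : vroot (d+1) (j:ℤ) c
      = Rmin (if 1 < (j:ℤ) then vroot d ((j:ℤ) - 1) (dCoeff c) else -(bnd c))
          (if (j:ℤ) < (d:ℤ) + 1 then vroot d (j:ℤ) (dCoeff c) else bnd c) P := rfl
  rw [hvr]
  have hea : (if 1 < (j:ℤ) then vroot d ((j:ℤ) - 1) (dCoeff c) else -(bnd c)) = a := by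
    by_cases hj : 1 < j
    · rw [if_pos (by exact_mod_cast hj), ha, if_pos hj]
      have hcast : ((j:ℤ) - 1) = ((j - 1 : ℕ) : ℤ) := by omega
      rw [hcast, hIH (j-1) (by omega) (by omega), Nat.sub_sub]
    · rw [if_neg (by exact_mod_cast hj), ha, if_neg hj]
  have heb : (if (j:ℤ) < (d:ℤ) + 1 then vroot d (j:ℤ) (dCoeff c) else bnd c) = b := by
    by_cases hj : j < d + 1
    · rw [if_pos (by exact_mod_cast hj), hb, if_pos hj]
      exact hIH j hj1 (by omega)
    · rw [if_neg (by push_neg; exact_mod_cast not_lt.mp hj), hb, if_neg hj]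
  rw [hea, heb]
  exact Rmin_eq_root P har hrb hrroot hno

lemma vroot_aux : ∀ d : ℕ, ∀ c : Fin (d+1) → ℝ,
    Multiset.card (monicPoly (d+1) c).roots = d+1 →
    ∀ j : ℕ, 1 ≤ j → j ≤ d+1 →
    vroot (d+1) (j:ℤ) c = ((monicPoly (d+1) c).roots.sort (·≤·)).getD (j-1) 0 := by
  intro d
  induction d with
  | zero =>
    intro c hyp j hj1 hjd
    exact main_step 0 c hyp j hj1 hjd (fun k hk1 hk0 => absurd (hk1.trans hk0) (by omega))
  | succ e ih =>
    intro c hyp j hj1 hjd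
    exact main_step (e+1) c hyp j hj1 hjd
      (fun k hk1 hkd => ih (dCoeff c) (card_roots_deriv (e+1) c hyp) k hk1 hkd)


/-- if the monic degree-`d` polynomial `P` is hyperbolic (all of
its `d` roots are real) and `u` is its `j`-th real root in increasing order
(with multiplicity), then `ρ_{d,j}(P) = u`. -/
theorem vroot_of_hyperbolic (d : ℕ) (hd : 0 < d) (c : Fin d → ℝ)
    (hyp : (monicPoly d c).roots.card = d)
    (j : ℕ) (hj1 : 1 ≤ j) (hjd : j ≤ d) (u : ℝ)
    (hu : ((monicPoly d c).roots.sort (· ≤ ·)).getD (j - 1) 0 = u) :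
    vroot d (j : ℤ) c = u := by
  obtain ⟨e, rfl⟩ := Nat.exists_eq_succ_of_ne_zero (Nat.pos_iff_ne_zero.mp hd)
  rw [← hu]
  exact vroot_aux e c hyp j hj1 hjd
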